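/- Let F₂ = ⟨a, b⟩, let k, n be positive integers, and let H be the kernel of the homomorphism F₂ → Z/(kn) sending a ↦ n, b ↦ 1. Then the elements bᵗ for t = 0, 1, …, n−1 form a complete set of representatives of the double cosets ⟨aᵏbⁿ⟩\F₂/H; in particular there are exactly n such double cosets. -/

import Mathlib

/-- With `H = ker(F₂ → ℤ/(kn), a ↦ n, b ↦ 1)` and `w = a^k b^n`, the elements
`b^t`, `t = 0, …, n-1`, form a complete set of representatives of the double cosets
`⟨w⟩\F₂/H`; in particular there are exactly `n` double cosets. -/
theorem stmt4 (k n : ℕ) (hk : 0 < k) (hn : 0 < n)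
    (a b : FreeGroup (Fin 2)) (ha : a = FreeGroup.of 0) (hb : b = FreeGroup.of 1)
    (f : FreeGroup (Fin 2) →* Multiplicative (ZMod (k * n)))
    (hf : f = FreeGroup.lift (fun i : Fin 2 =>
      if i = 0 then Multiplicative.ofAdd ((n : ZMod (k * n)))
      else Multiplicative.ofAdd ((1 : ZMod (k * n)))))
    (H : Subgroup (FreeGroup (Fin 2))) (hH : H = f.ker)
    (w : FreeGroup (Fin 2)) (hw : w = a ^ k * b ^ n) :
    (∀ x : FreeGroup (Fin 2), ∃! t : Fin n,
        ∃ j : ℤ, ∃ h ∈ H, x = w ^ j * b ^ (t : ℕ) * h) ∧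
    Nat.card (DoubleCoset.Quotient (Subgroup.zpowers w : Set (FreeGroup (Fin 2)))
      (H : Set (FreeGroup (Fin 2)))) = n := by
  have hkn : 0 < k * n := Nat.mul_pos hk hn
  haveI : NeZero (k * n) := ⟨hkn.ne'⟩
  haveI : NeZero n := ⟨hn.ne'⟩
  have hfb : f b = Multiplicative.ofAdd ((1 : ZMod (k * n))) := by
    rw [hf, hb]; simp
  have hfa : f a = Multiplicative.ofAdd ((n : ZMod (k * n))) := by
    rw [hf, ha]; simp
  have hfw : f w = Multiplicative.ofAdd ((n : ZMod (k * n))) := by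
    rw [hw, map_mul, map_pow, map_pow, hfa, hfb]
    rw [← ofAdd_nsmul, ← ofAdd_nsmul, ← ofAdd_add]
    congr 1
    simp [nsmul_eq_mul, ← Nat.cast_mul, ZMod.natCast_self]
  -- key computation
  have hval : ∀ (x : FreeGroup (Fin 2)) (t : ℕ) (j : ℤ) (h : FreeGroup (Fin 2)),
      h ∈ H → x = w ^ j * b ^ t * h →
      Multiplicative.toAdd (f x) = j * (n : ZMod (k * n)) + t := by
    intro x t j h hh hx
    have hfh : f h = 1 := by rw [hH] at hh; exact hh
    rw [hx, map_mul f, map_mul f, map_zpow f, map_pow f, hfh, mul_one, hfb, hfw,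
      ← ofAdd_zsmul, ← ofAdd_nsmul, ← ofAdd_add, toAdd_ofAdd,
      zsmul_eq_mul, nsmul_eq_mul, mul_one]
  set φ : ZMod (k * n) →+* ZMod n := ZMod.castHom (dvd_mul_left n k) (ZMod n) with hφ
  have hφn : φ ((n : ZMod (k * n))) = 0 := by
    rw [map_natCast, ZMod.natCast_self]
  have part1 : ∀ x : FreeGroup (Fin 2), ∃! t : Fin n,
      ∃ j : ℤ, ∃ h ∈ H, x = w ^ j * b ^ (t : ℕ) * h := by
    intro x
    set c : ZMod (k * n) := Multiplicative.toAdd (f x) with hc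
    have hcv : ((c.val : ℕ) : ZMod (k * n)) = c := ZMod.natCast_rightInverse c
    refine ⟨⟨c.val % n, Nat.mod_lt _ hn⟩, ?_, ?_⟩
    · refine ⟨(c.val / n : ℕ), (w ^ ((c.val / n : ℕ) : ℤ) * b ^ (c.val % n))⁻¹ * x, ?_, by group⟩
      have hceq : c = ((c.val / n : ℕ) : ℤ) * (n : ZMod (k * n)) + (c.val % n : ℕ) := by
        rw [Int.cast_natCast, ← Nat.cast_mul, ← Nat.cast_add, Nat.div_add_mod', hcv]
      have hfy : Multiplicative.toAdd (f (w ^ ((c.val / n : ℕ) : ℤ) * b ^ (c.val % n)))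
          = ((c.val / n : ℕ) : ℤ) * (n : ZMod (k * n)) + (c.val % n : ℕ) :=
        hval _ _ _ 1 (one_mem H) (by group)
      rw [hH, MonoidHom.mem_ker, map_mul, map_inv]
      have : f (w ^ ((c.val / n : ℕ) : ℤ) * b ^ (c.val % n)) = f x := by
        apply Multiplicative.toAdd.injective
        rw [hfy]
        exact hceq.symm
      rw [this, inv_mul_cancel]
    · rintro t' ⟨j', h', hh', hx'⟩
      have h1 := hval x _ j' h' hh' hx'
      -- apply φ
      have h2 : (↑(t' : ℕ) : ZMod n) = φ c := by
        rw [hc, h1, map_add, map_mul, map_intCast, hφn, mul_zero, zero_add, map_natCast]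
      have h3 : ((c.val % n : ℕ) : ZMod n) = φ c := by
        calc ((c.val % n : ℕ) : ZMod n) = ((c.val : ℕ) : ZMod n) := ZMod.natCast_mod _ _
          _ = φ ((c.val : ℕ) : ZMod (k * n)) := (map_natCast φ _).symm
          _ = φ c := by rw [hcv]
      apply Fin.ext
      have := h2.trans h3.symm
      have e1 : ((t' : ℕ) : ZMod n).val = (t' : ℕ) := ZMod.val_cast_of_lt t'.isLt
      have e2 : ((c.val % n : ℕ) : ZMod n).val = c.val % n :=
        ZMod.val_cast_of_lt (Nat.mod_lt _ hn)
      calc (t' : ℕ) = ((t' : ℕ) : ZMod n).val := e1.symm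
        _ = ((c.val % n : ℕ) : ZMod n).val := by rw [this]
        _ = c.val % n := e2
  refine ⟨part1, ?_⟩
  have hbij : Function.Bijective (fun t : Fin n =>
      DoubleCoset.mk (Subgroup.zpowers w) H (b ^ (t : ℕ))) := by
    constructor
    · intro t t' hmk
      obtain ⟨g, hg, h, hh, heq⟩ := (DoubleCoset.eq _ _ _ _).mp hmk
      obtain ⟨j, rfl⟩ := Subgroup.mem_zpowers_iff.mp hg
      have hu := part1 (b ^ (t' : ℕ))
      exact hu.unique ⟨j, h, hh, heq⟩ ⟨0, 1, one_mem H, by group⟩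
    · intro q
      induction q using Quotient.inductionOn with
      | h x =>
        obtain ⟨t, ⟨j, h, hh, hx⟩, -⟩ := part1 x
        exact ⟨t, ((DoubleCoset.eq _ _ _ _).mpr
          ⟨w ^ j, Subgroup.mem_zpowers_iff.mpr ⟨j, rfl⟩, h, hh, hx⟩)⟩
  rw [← Nat.card_eq_of_bijective _ hbij]
  simp
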